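/- Half-space version of the reflection geometric lemma: Let H = {x ∈ ℝⁿ : x_n < 0} and let p ∈ ℝⁿ with |B_1(p) \ H| ≤ h for h sufficiently small. Then the distance β from p to the hyperplane complement, defined so that B_1(p − β e_n) ⊆ H with β minimal, satisfies β ≤ C(n) h^{2/(n+1)} for a dimensional constant C(n). Equivalently, there is v ∈ ℝⁿ with |v| ≤ C(n) h^{2/(n+1)} and B_1(p + v) ⊆ H. -/

import Mathlib

open MeasureTheory Metric

/-- Coordinate distance is bounded by the Euclidean distance. -/
lemma euclid_coord_dist_le {n : ℕ} (x y : EuclideanSpace ℝ (Fin n)) (i : Fin n) :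
    dist (x i) (y i) ≤ dist x y := by
  rw [EuclideanSpace.dist_eq]
  have h1 : dist (x i) (y i) = Real.sqrt (dist (x i) (y i) ^ 2) :=
    (Real.sqrt_sq dist_nonneg).symm
  rw [h1]
  apply Real.sqrt_le_sqrt
  exact Finset.single_le_sum (f := fun k => dist (x k) (y k) ^ 2)
    (fun j _ => sq_nonneg _) (Finset.mem_univ i)

/-- The protruding cap contains a box of volume `≍ b^{(n+1)/2}`. -/
lemma box_volume_le (n : ℕ) (hn : 1 ≤ n) (p : EuclideanSpace ℝ (Fin n))
    (b : ℝ) (hb0 : 0 < b) (hb1 : b ≤ 1) (hbβ : b ≤ p ⟨n - 1, Nat.sub_one_lt_of_le hn le_rfl⟩ + 1) :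
    ENNReal.ofReal ((b / 2) * (2 * Real.sqrt (b / (2 * (n - 1)))) ^ (n - 1))
      ≤ volume (ball p 1 \ {x : EuclideanSpace ℝ (Fin n) | x ⟨n - 1, Nat.sub_one_lt_of_le hn le_rfl⟩ < 0}) := by
  set j : Fin n := ⟨n - 1, by omega⟩ with hj
  set s : ℝ := Real.sqrt (b / (2 * (n - 1))) with hs
  have hs0 : 0 ≤ s := Real.sqrt_nonneg _
  -- the box as a pi-set
  set A : Set (Fin n → ℝ) := Set.univ.pi fun i =>
    if i = j then Set.Ioo (p j + 1 - b) (p j + 1 - b / 2) else Set.Ioo (p i - s) (p i + s)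
    with hA
  set e := (MeasurableEquiv.toLp 2 (Fin n → ℝ)).symm with he
  have hAmeas : MeasurableSet A := by
    apply MeasurableSet.univ_pi
    intro i
    split <;> exact measurableSet_Ioo
  -- volume of the box
  have hvolA : volume (e ⁻¹' A) =
      ENNReal.ofReal ((b / 2) * (2 * s) ^ (n - 1)) := by
    rw [(EuclideanSpace.volume_preserving_symm_measurableEquiv_toLp (Fin n)).measure_preimage
      hAmeas.nullMeasurableSet]
    rw [hA, volume_pi_pi]
    rw [← Finset.mul_prod_erase Finset.univ _ (Finset.mem_univ j)]
    have h1 : volume (if j = j then Set.Ioo (p j + 1 - b) (p j + 1 - b / 2)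
        else Set.Ioo (p j - s) (p j + s)) = ENNReal.ofReal (b / 2) := by
      rw [if_pos rfl, Real.volume_Ioo]
      congr 1; ring
    have h2 : ∀ i ∈ Finset.univ.erase j,
        volume (if i = j then Set.Ioo (p j + 1 - b) (p j + 1 - b / 2)
          else Set.Ioo (p i - s) (p i + s)) = ENNReal.ofReal (2 * s) := by
      intro i hi
      rw [if_neg (Finset.ne_of_mem_erase hi), Real.volume_Ioo]
      congr 1; ring
    rw [h1, Finset.prod_congr rfl h2, Finset.prod_const,
      Finset.card_erase_of_mem (Finset.mem_univ j), Finset.card_univ, Fintype.card_fin,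
      ← ENNReal.ofReal_pow (by positivity), ← ENNReal.ofReal_mul (by positivity)]
  -- the box is contained in the cap
  have hsub : (e ⁻¹' A) ⊆ ball p 1 \ {x : EuclideanSpace ℝ (Fin n) | x j < 0} := by
    intro x hx
    have hx' : ∀ i : Fin n, x i ∈ (if i = j then Set.Ioo (p j + 1 - b) (p j + 1 - b / 2)
        else Set.Ioo (p i - s) (p i + s)) := by
      intro i
      exact hx i (Set.mem_univ i)
    have hxj : x j ∈ Set.Ioo (p j + 1 - b) (p j + 1 - b / 2) := by
      have := hx' j; rwa [if_pos rfl] at this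
    have hxi : ∀ i : Fin n, i ≠ j → x i ∈ Set.Ioo (p i - s) (p i + s) := by
      intro i hij
      have := hx' i; rwa [if_neg hij] at this
    constructor
    · -- inside the ball
      rw [mem_ball, EuclideanSpace.dist_eq]
      rw [show (1 : ℝ) = Real.sqrt 1 by simp]
      apply Real.sqrt_lt_sqrt (Finset.sum_nonneg fun i _ => sq_nonneg _)
      rw [← Finset.add_sum_erase Finset.univ _ (Finset.mem_univ j)]
      have hj1 : dist (x j) (p j) ^ 2 < (1 - b / 2) ^ 2 := by
        rw [Real.dist_eq, sq_abs]
        have h1 : x j - p j < 1 - b / 2 := by have := hxj.2; linarith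
        have h2 : -(1 - b / 2) < x j - p j := by have := hxj.1; nlinarith
        nlinarith
      have hji : ∀ i ∈ Finset.univ.erase j, dist (x i) (p i) ^ 2 ≤ s ^ 2 := by
        intro i hi
        have hij := Finset.ne_of_mem_erase hi
        have h := hxi i hij
        rw [Real.dist_eq, sq_abs]
        have h1 : x i - p i < s := by have := h.2; linarith
        have h2 : -s < x i - p i := by have := h.1; linarith
        nlinarith
      have hsum : ∑ i ∈ Finset.univ.erase j, dist (x i) (p i) ^ 2 ≤ (n - 1 : ℝ) * s ^ 2 := by
        calc ∑ i ∈ Finset.univ.erase j, dist (x i) (p i) ^ 2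
            ≤ ∑ _i ∈ Finset.univ.erase j, s ^ 2 := Finset.sum_le_sum hji
          _ = (n - 1 : ℕ) * s ^ 2 := by
              rw [Finset.sum_const, Finset.card_erase_of_mem (Finset.mem_univ j),
                Finset.card_univ, Fintype.card_fin, nsmul_eq_mul]
          _ = (n - 1 : ℝ) * s ^ 2 := by
              rw [Nat.cast_sub hn, Nat.cast_one]
      have hns : (n - 1 : ℝ) * s ^ 2 ≤ b / 2 := by
        rcases eq_or_lt_of_le hn with h1 | h1
        · have hne : n = 1 := h1.symm
          subst hne
          norm_num
          positivity
        · have hne : ((n : ℝ) - 1) ≠ 0 := by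
            have : (2 : ℝ) ≤ (n : ℝ) := by exact_mod_cast (h1 : 2 ≤ n)
            linarith
          have h2n : (2 : ℝ) ≤ (n : ℝ) := by exact_mod_cast (h1 : 2 ≤ n)
          rw [hs, Real.sq_sqrt (div_nonneg hb0.le (by nlinarith))]
          have heq : ((n : ℝ) - 1) * (b / (2 * ((n : ℝ) - 1))) = b / 2 := by
            field_simp
          linarith [heq]
      nlinarith [hb0.le, hb1]
    · -- above the hyperplane
      simp only [Set.mem_setOf_eq, not_lt]
      have := hxj.1
      linarith
  calc ENNReal.ofReal ((b / 2) * (2 * s) ^ (n - 1)) = volume (e ⁻¹' A) := hvolA.symm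
    _ ≤ volume (ball p 1 \ {x : EuclideanSpace ℝ (Fin n) | x j < 0}) := measure_mono hsub

/-- Half-space version of the geometric reflection lemma: a unit ball protruding from the
half-space `H = {xₙ < 0}` by a small volume `h` can be translated inside `H` by a vector of
length `≲ h^{2/(n+1)}`. -/
theorem ball_into_halfspace (n : ℕ) (hn : 1 ≤ n) :
    ∃ C : ℝ, 0 < C ∧ ∃ h₀ : ℝ, 0 < h₀ ∧
      ∀ h : ℝ, 0 < h → h ≤ h₀ →
        ∀ p : EuclideanSpace ℝ (Fin n),
          volume (ball p 1 \ {x : EuclideanSpace ℝ (Fin n) | x ⟨n - 1, by omega⟩ < 0})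
              ≤ ENNReal.ofReal h →
          ∃ v : EuclideanSpace ℝ (Fin n),
            ‖v‖ ≤ C * h ^ ((2 : ℝ) / (n + 1)) ∧
            ball (p + v) 1 ⊆ {x : EuclideanSpace ℝ (Fin n) | x ⟨n - 1, by omega⟩ < 0} := by
  -- the dimensional constant
  set t : ℝ := Real.sqrt (1 / (2 * (n - 1))) with ht
  set K : ℝ := (1 / 2) * (2 * t) ^ (n - 1) with hK
  have hK0 : 0 < K := by
    rcases eq_or_lt_of_le hn with h1 | h1
    · have : n = 1 := h1.symm
      subst this; norm_num [hK]
    · have hn2 : (0 : ℝ) < 2 * ((n : ℝ) - 1) := by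
        have : (2 : ℝ) ≤ (n : ℝ) := by exact_mod_cast (h1 : 2 ≤ n)
        linarith
      have ht0 : 0 < t := Real.sqrt_pos.mpr (by positivity)
      positivity
  set q : ℝ := ((n : ℝ) + 1) / 2 with hq
  set eexp : ℝ := 2 / ((n : ℝ) + 1) with heexp
  have hnpos : (0 : ℝ) < (n : ℝ) + 1 := by positivity
  have hq0 : 0 < q := by rw [hq]; positivity
  have he0 : 0 < eexp := by rw [heexp]; positivity
  have hqe : q * eexp = 1 := by
    rw [hq, heexp]; field_simp
  -- the key rewriting of the box volume
  have hbox : ∀ b : ℝ, 0 < b →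
      (b / 2) * (2 * Real.sqrt (b / (2 * (n - 1)))) ^ (n - 1) = K * b ^ q := by
    intro b hb
    have h1 : b / (2 * ((n : ℝ) - 1)) = b * (1 / (2 * ((n : ℝ) - 1))) := by ring
    have h2 : Real.sqrt (b / (2 * ((n : ℝ) - 1))) = Real.sqrt b * t := by
      rw [h1, Real.sqrt_mul hb.le, ht]
    rw [h2]
    have h3 : (2 * (Real.sqrt b * t)) ^ (n - 1)
        = Real.sqrt b ^ (n - 1) * (2 * t) ^ (n - 1) := by
      rw [← mul_pow]; ring_nf
    rw [h3]
    have h4 : b * Real.sqrt b ^ (n - 1) = b ^ q := by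
      have h5 : Real.sqrt b ^ (n - 1) = b ^ (((n : ℝ) - 1) / 2) := by
        rw [← Real.rpow_natCast (Real.sqrt b) (n - 1), Real.sqrt_eq_rpow,
          ← Real.rpow_mul hb.le]
        congr 1
        rw [Nat.cast_sub hn, Nat.cast_one]
        ring
      rw [h5]
      nth_rewrite 1 [← Real.rpow_one b]
      rw [← Real.rpow_add hb]
      congr 1
      rw [hq]
      ring
    calc (b / 2) * (Real.sqrt b ^ (n - 1) * (2 * t) ^ (n - 1))
        = ((1 / 2) * (2 * t) ^ (n - 1)) * (b * Real.sqrt b ^ (n - 1)) := by ring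
      _ = K * b ^ q := by rw [h4, hK]
  refine ⟨(K ^ eexp)⁻¹, by positivity, K / 2, by positivity, ?_⟩
  intro h hh0 hh1 p hvol
  set j : Fin n := ⟨n - 1, by omega⟩ with hj
  set β : ℝ := p j + 1 with hβ
  rcases le_or_gt β 0 with hβ0 | hβ0
  · -- ball already inside the half-space
    refine ⟨0, ?_, ?_⟩
    · rw [norm_zero]
      positivity
    · intro x hx
      simp only [Set.mem_setOf_eq]
      rw [add_zero] at hx
      have h1 : dist (x j) (p j) < 1 := lt_of_le_of_lt (euclid_coord_dist_le x p j) hx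
      have h2 : x j - p j < 1 := by
        have := abs_lt.mp (by rwa [Real.dist_eq] at h1)
        exact this.2
      linarith
  · -- the cap has positive height β; compare with the box
    set b : ℝ := min β 1 with hb
    have hb0 : 0 < b := lt_min hβ0 one_pos
    have hb1 : b ≤ 1 := min_le_right _ _
    have hbβ : b ≤ β := min_le_left _ _
    have key : K * b ^ q ≤ h := by
      have h1 := box_volume_le n hn p b hb0 hb1 hbβ
      have h2 := le_trans h1 hvol
      have h3 := (ENNReal.ofReal_le_ofReal_iff hh0.le).mp h2
      rwa [hbox b hb0] at h3
    -- from h ≤ K/2 conclude b < 1, hence b = β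
    have hblt : b < 1 := by
      by_contra hcon
      push_neg at hcon
      have h1 : (1 : ℝ) ≤ b ^ q := Real.one_le_rpow hcon hq0.le
      nlinarith
    have hbeq : b = β := by
      rcases min_cases β 1 with ⟨h1, _⟩ | ⟨h1, h2⟩
      · exact h1
      · rw [hb] at hblt
        rw [h1] at hblt
        norm_num at hblt
    rw [hbeq] at key
    -- final bound on β
    have hfin : β ≤ (K ^ eexp)⁻¹ * h ^ eexp := by
      have h1 : β ^ q ≤ h / K := by
        rw [le_div_iff₀ hK0]
        linarith [key]
      have h2 : (β ^ q) ^ eexp ≤ (h / K) ^ eexp :=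
        Real.rpow_le_rpow (Real.rpow_nonneg hβ0.le _) h1 he0.le
      rw [← Real.rpow_mul hβ0.le, hqe, Real.rpow_one] at h2
      rwa [Real.div_rpow hh0.le hK0.le, div_eq_mul_inv, mul_comm] at h2
    refine ⟨EuclideanSpace.single j (-β), ?_, ?_⟩
    · rw [EuclideanSpace.norm_single, Real.norm_eq_abs, abs_neg, abs_of_pos hβ0]
      exact hfin
    · intro x hx
      simp only [Set.mem_setOf_eq]
      rw [mem_ball] at hx
      have h1 : dist (x j) ((p + EuclideanSpace.single j (-β)) j) < 1 :=
        lt_of_le_of_lt (euclid_coord_dist_le x _ j) hx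
      have h2 : (p + EuclideanSpace.single j (-β)) j = p j - β := by
        rw [PiLp.add_apply, EuclideanSpace.single_apply, if_pos rfl]
        ring
      rw [h2, Real.dist_eq] at h1
      have h3 := (abs_lt.mp h1).2
      rw [hβ] at h3
      linarith
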